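/- Let D be a self-adjoint operator on a finite-dimensional complex inner product space H with a self-adjoint involution ε anticommuting with D. Write H = H⁺ ⊕ H⁻ for the eigenspaces of ε and D± = D|_{H±}: H± → H∓. Then for all t > 0, the supertrace str(exp(-tD²)) := tr(ε · exp(-tD²)) equals dim ker D⁺ - dim ker D⁻, independently of t. -/

import Mathlib

open ContinuousLinearMap

lemma trace_eps_pow_eq_zero {M : Type*} [AddCommGroup M] [Module ℂ M] [Module.Finite ℂ M]
    (d e : M →ₗ[ℂ] M) (hde : d * e = -(e * d)) (k : ℕ) (hk : k ≠ 0) :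
    LinearMap.trace ℂ M (e * d ^ k) = 0 := by
  obtain ⟨m, rfl⟩ := Nat.exists_eq_succ_of_ne_zero hk
  have h1 : e * d ^ (m + 1) = (e * d ^ m) * d := by
    rw [pow_succ]; noncomm_ring
  have h2 : e * d ^ (m + 1) = -(d * (e * d ^ m)) := by
    have h : e * d = -(d * e) := by rw [hde, neg_neg]
    calc e * d ^ (m+1) = (e * d) * d ^ m := by rw [pow_succ']; noncomm_ring
    _ = -(d * (e * d ^ m)) := by rw [h]; noncomm_ring
  have hneg : LinearMap.trace ℂ M (e * d ^ (m+1)) = -LinearMap.trace ℂ M (e * d ^ (m+1)) := by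
    conv_lhs => rw [h2]
    conv_rhs => rw [h1]
    rw [map_neg, LinearMap.trace_mul_comm ℂ d (e * d ^ m)]
  linear_combination (1/2 : ℂ) * hneg

/-- Trace of an anticommuting partner of an invertible operator is zero. -/
lemma trace_eq_zero_of_anticommute {M : Type*} [AddCommGroup M] [Module ℂ M]
    [Module.Finite ℂ M] (d e : M →ₗ[ℂ] M) (hde : d * e = -(e * d))
    (hd : Function.Bijective d) : LinearMap.trace ℂ M e = 0 := by
  obtain ⟨u, hu⟩ := (Module.End.isUnit_iff d).mpr hd
  have key : (u : M →ₗ[ℂ] M) * e * (↑u⁻¹ : M →ₗ[ℂ] M) = -e := by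
    rw [hu, hde]
    have : (↑u * ↑u⁻¹ : M →ₗ[ℂ] M) = 1 := u.mul_inv
    calc -(e * d) * ↑u⁻¹ = -(e * (d * ↑u⁻¹)) := by noncomm_ring
    _ = -e := by rw [← hu, this, mul_one]
  have := LinearMap.trace_conj (R := ℂ) (M := M) e u
  rw [key, map_neg] at this
  linear_combination (-1/2 : ℂ) * this

/-- Trace of an involution is the difference of dimensions of its ±1 eigenspaces. -/
lemma trace_involution {M : Type*} [AddCommGroup M] [Module ℂ M] [FiniteDimensional ℂ M]
    (e : M →ₗ[ℂ] M) (he : e * e = 1) :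
    LinearMap.trace ℂ M e =
      (Module.finrank ℂ (LinearMap.ker (e - LinearMap.id)) : ℂ)
        - (Module.finrank ℂ (LinearMap.ker (e + LinearMap.id)) : ℂ) := by
  set P := LinearMap.ker (e - LinearMap.id) with hP
  set N := LinearMap.ker (e + LinearMap.id) with hN
  have hee : ∀ y, e (e y) = y := by
    intro y
    have := LinearMap.ext_iff.mp he y
    simpa [Module.End.mul_apply] using this
  have hmemP : ∀ x, x ∈ P ↔ e x = x := by
    intro x; simp [hP, LinearMap.mem_ker, sub_eq_zero]
  have hmemN : ∀ x, x ∈ N ↔ e x = -x := by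
    intro x
    simp [hN, LinearMap.mem_ker, add_eq_zero_iff_eq_neg]
  have hcompl : IsCompl P N := by
    constructor
    · rw [disjoint_iff]
      ext x
      simp only [Submodule.mem_inf, Submodule.mem_bot, hmemP, hmemN]
      constructor
      · rintro ⟨h1, h2⟩
        have h3 : (2 : ℂ) • x = 0 := by
          rw [two_smul]
          nth_rewrite 1 [← h1]
          rw [h2]; abel
        simpa using (smul_eq_zero.mp h3).resolve_left (by norm_num)
      · rintro rfl; constructor <;> simp
    · rw [codisjoint_iff, eq_top_iff]
      intro x _
      have hx : x = (2 : ℂ)⁻¹ • (x + e x) + (2 : ℂ)⁻¹ • (x - e x) := by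
        rw [← smul_add]
        have h4 : x + e x + (x - e x) = (2 : ℂ) • x := by rw [two_smul]; abel
        rw [h4, smul_smul]; norm_num
      rw [hx]
      apply Submodule.add_mem_sup
      · apply Submodule.smul_mem
        rw [hmemP, map_add, hee, add_comm]
      · apply Submodule.smul_mem
        rw [hmemN, map_sub, hee]
        abel
  have hint : DirectSum.IsInternal (fun b : Bool => cond b P N) := by
    rw [DirectSum.isInternal_submodule_iff_isCompl _ (i := true) (j := false) (by simp)
      (by ext b; cases b <;> simp)]
    exact hcompl
  have hmapsTo : ∀ b : Bool,
      Set.MapsTo e ((cond b P N : Submodule ℂ M) : Set M)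
        ((cond b P N : Submodule ℂ M) : Set M) := by
    intro b
    cases b <;> intro x hx <;> simp only [Bool.cond_false, Bool.cond_true] at hx ⊢ <;>
      rw [SetLike.mem_coe] at hx ⊢
    · rw [hmemN] at hx ⊢
      rw [hx, map_neg, hx, neg_neg]
    · rw [hmemP] at hx ⊢
      rw [hx, hx]
  rw [LinearMap.trace_eq_sum_trace_restrict hint hmapsTo, Fintype.sum_bool]
  have hrP : e.restrict (hmapsTo true) = LinearMap.id := by
    ext x
    simp only [LinearMap.restrict_apply, LinearMap.id_coe, id_eq]
    exact (hmemP x.1).mp x.2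
  have hrN : e.restrict (hmapsTo false) = -LinearMap.id := by
    ext x
    simp only [LinearMap.restrict_apply, LinearMap.neg_apply, LinearMap.id_coe, id_eq]
    exact (hmemN x.1).mp x.2
  rw [hrP, hrN, map_neg, LinearMap.trace_id, LinearMap.trace_id]
  simp only [cond_true, cond_false]
  ring

/-- Supertrace reduction: for a symmetric `d` anticommuting with an involution `e`,
the trace of `e` localizes to the kernel of `d`. -/
lemma trace_involution_eq_of_symm {H : Type*} [NormedAddCommGroup H] [InnerProductSpace ℂ H]
    [FiniteDimensional ℂ H] (d e : H →ₗ[ℂ] H) (hsym : d.IsSymmetric)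
    (hde : d * e = -(e * d)) (he2 : e * e = 1) :
    LinearMap.trace ℂ H e =
      (Module.finrank ℂ ((LinearMap.ker d ⊓ LinearMap.ker (e - LinearMap.id) : Submodule ℂ H)) : ℂ)
        - (Module.finrank ℂ
            ((LinearMap.ker d ⊓ LinearMap.ker (e + LinearMap.id) : Submodule ℂ H)) : ℂ) := by
  set K := LinearMap.ker d with hK
  set R := LinearMap.range d with hR
  have hdisj : Disjoint K R := by
    rw [disjoint_iff]
    ext x
    simp only [Submodule.mem_inf, Submodule.mem_bot, hK, hR, LinearMap.mem_ker,
      LinearMap.mem_range]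
    constructor
    · rintro ⟨hx0, y, rfl⟩
      rw [← inner_self_eq_zero (𝕜 := ℂ), hsym y (d y), hx0, inner_zero_right]
    · rintro rfl; exact ⟨map_zero d, 0, map_zero d⟩
  have hcompl : IsCompl K R := by
    refine ⟨hdisj, ?_⟩
    rw [codisjoint_iff]
    apply Submodule.eq_top_of_finrank_eq
    have h1 := Submodule.finrank_sup_add_finrank_inf_eq K R
    rw [disjoint_iff.mp hdisj, finrank_bot, add_zero] at h1
    have h2 := LinearMap.finrank_range_add_finrank_ker d
    rw [h1, ← hK, ← hR] at *
    omega
  have hint : DirectSum.IsInternal (fun b : Bool => cond b K R) := by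
    rw [DirectSum.isInternal_submodule_iff_isCompl _ (i := true) (j := false) (by simp)
      (by ext b; cases b <;> simp)]
    exact hcompl
  have hdeapp : ∀ x, d (e x) = -(e (d x)) := by
    intro x
    have := LinearMap.ext_iff.mp hde x
    simpa [Module.End.mul_apply] using this
  have hmapsTo : ∀ b : Bool,
      Set.MapsTo e ((cond b K R : Submodule ℂ H) : Set H)
        ((cond b K R : Submodule ℂ H) : Set H) := by
    intro b
    cases b <;> intro x hx <;> simp only [Bool.cond_false, Bool.cond_true] at hx ⊢ <;>
      rw [SetLike.mem_coe] at hx ⊢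
    · obtain ⟨y, rfl⟩ := LinearMap.mem_range.mp hx
      refine LinearMap.mem_range.mpr ⟨-(e y), ?_⟩
      rw [map_neg, hdeapp, neg_neg]
    · rw [LinearMap.mem_ker] at hx ⊢
      rw [hdeapp, hx, map_zero, neg_zero]
  rw [LinearMap.trace_eq_sum_trace_restrict hint hmapsTo, Fintype.sum_bool]
  -- trace on R vanishes
  have hdR : Set.MapsTo d ((R : Submodule ℂ H) : Set H) ((R : Submodule ℂ H) : Set H) := by
    rintro x hx
    rw [SetLike.mem_coe] at *
    exact LinearMap.mem_range.mpr ⟨x, rfl⟩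
  have hRzero : LinearMap.trace ℂ (cond false K R : Submodule ℂ H)
      (e.restrict (hmapsTo false)) = 0 := by
    apply trace_eq_zero_of_anticommute (d.restrict hdR)
    · ext x
      have := hdeapp x.1
      exact this
    · have hinj : Function.Injective (d.restrict hdR) := by
        intro x y hxy
        replace hxy : (⟨d x.1, hdR x.2⟩ : R) = ⟨d y.1, hdR y.2⟩ := hxy
        have h0 : d (x.1 - y.1) = 0 := by
          have := Subtype.ext_iff.mp hxy
          simp only at this
          rw [map_sub, this, sub_self]
        have hmem : (x.1 - y.1) ∈ K ⊓ R := by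
          refine ⟨LinearMap.mem_ker.mpr h0, ?_⟩
          exact Submodule.sub_mem R x.2 y.2
        rw [disjoint_iff.mp hdisj, Submodule.mem_bot, sub_eq_zero] at hmem
        exact Subtype.ext hmem
      exact ⟨hinj, LinearMap.injective_iff_surjective.mp hinj⟩
  rw [hRzero, add_zero]
  -- trace on K via involution
  have heK : (e.restrict (hmapsTo true)) * (e.restrict (hmapsTo true)) = 1 := by
    have he2app : ∀ x, e (e x) = x := by
      intro x
      have := LinearMap.ext_iff.mp he2 x
      simpa [Module.End.mul_apply] using this
    ext x
    exact he2app x.1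
  rw [trace_involution _ heK]
  congr 2
  · have heq : LinearMap.ker ((e.restrict (hmapsTo true)) - LinearMap.id)
        = Submodule.comap (K : Submodule ℂ H).subtype
            (K ⊓ LinearMap.ker (e - LinearMap.id)) := by
      ext x
      simp only [LinearMap.mem_ker, Submodule.mem_comap, Submodule.mem_inf,
        Submodule.coe_subtype, LinearMap.sub_apply, LinearMap.id_apply,
        LinearMap.restrict_apply]
      constructor
      · intro hx
        refine ⟨x.2, ?_⟩
        have := Subtype.ext_iff.mp hx
        exact this
      · rintro ⟨-, hx⟩
        apply Subtype.ext
        exact hx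
    rw [heq]
    exact (Submodule.comapSubtypeEquivOfLe inf_le_left).finrank_eq
  · have heq : LinearMap.ker ((e.restrict (hmapsTo true)) + LinearMap.id)
        = Submodule.comap (K : Submodule ℂ H).subtype
            (K ⊓ LinearMap.ker (e + LinearMap.id)) := by
      ext x
      simp only [LinearMap.mem_ker, Submodule.mem_comap, Submodule.mem_inf,
        Submodule.coe_subtype, LinearMap.add_apply, LinearMap.id_apply,
        LinearMap.restrict_apply]
      constructor
      · intro hx
        refine ⟨x.2, ?_⟩
        have := Subtype.ext_iff.mp hx
        exact this
      · rintro ⟨-, hx⟩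
        apply Subtype.ext
        exact hx
    rw [heq]
    exact (Submodule.comapSubtypeEquivOfLe inf_le_left).finrank_eq

/-- Finite-dimensional McKean–Singer identity: the supertrace of the heat semigroup
equals `dim ker D⁺ - dim ker D⁻`, where `ker D± = ker D ∩ H±`. -/
theorem mckean_singer
    {H : Type*} [NormedAddCommGroup H] [InnerProductSpace ℂ H] [FiniteDimensional ℂ H]
    (D : H →L[ℂ] H) (hD : IsSelfAdjoint D)
    (ε : H →L[ℂ] H) (hε2 : ε ∘L ε = 1) (hεsa : adjoint ε = ε)
    (hanti : D ∘L ε = -(ε ∘L D)) :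
    ∀ t : ℝ, 0 < t →
      LinearMap.trace ℂ H ((ε ∘L NormedSpace.exp (-(t : ℂ) • (D ∘L D))) : H →ₗ[ℂ] H)
        = (Module.finrank ℂ
            ((LinearMap.ker (D : H →ₗ[ℂ] H) ⊓ LinearMap.ker ((ε : H →ₗ[ℂ] H) - LinearMap.id) : Submodule ℂ H)) : ℂ)
          - (Module.finrank ℂ
            ((LinearMap.ker (D : H →ₗ[ℂ] H) ⊓ LinearMap.ker ((ε : H →ₗ[ℂ] H) + LinearMap.id) : Submodule ℂ H)) : ℂ) := by
  intro t ht
  set d : H →ₗ[ℂ] H := (D : H →ₗ[ℂ] H) with hd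
  set e : H →ₗ[ℂ] H := (ε : H →ₗ[ℂ] H) with he
  have hde : d * e = -(e * d) := by
    have := congrArg ContinuousLinearMap.toLinearMap hanti
    exact this
  have he2 : e * e = 1 := by
    have := congrArg ContinuousLinearMap.toLinearMap hε2
    exact this
  -- the linear functional X ↦ tr (e ∘ X)
  set φ : (H →L[ℂ] H) →ₗ[ℂ] ℂ :=
    { toFun := fun X => LinearMap.trace ℂ H (e * (X : H →ₗ[ℂ] H))
      map_add' := by
        intro x y
        simp [ContinuousLinearMap.coe_add, mul_add]
      map_smul' := by
        intro c x
        simp [ContinuousLinearMap.coe_smul, mul_smul_comm] } with hφ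
  set A : H →L[ℂ] H := -(t : ℂ) • (D ∘L D) with hA
  have hstep : LinearMap.trace ℂ H ((ε ∘L NormedSpace.exp A) : H →ₗ[ℂ] H)
      = φ (NormedSpace.exp A) := by
    simp [hφ, ContinuousLinearMap.coe_comp]
    rfl
  rw [hstep]
  have hφc : φ (NormedSpace.exp A) = LinearMap.trace ℂ H e := by
    rw [NormedSpace.exp_eq_tsum (𝕂 := ℂ)]
    have hsum := NormedSpace.expSeries_summable' (𝕂 := ℂ) A
    have hcont : Continuous φ := φ.continuous_of_finiteDimensional
    have hmap : φ (∑' n : ℕ, ((n.factorial : ℂ))⁻¹ • A ^ n)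
        = ∑' n : ℕ, φ (((n.factorial : ℂ))⁻¹ • A ^ n) := by
      exact (hsum.hasSum.map φ hcont).tsum_eq.symm
    rw [hmap]
    have hzero : ∀ n : ℕ, n ≠ 0 → φ (((n.factorial : ℂ))⁻¹ • A ^ n) = 0 := by
      intro n hn
      have h1 : ∀ k : ℕ, ((A ^ k : H →L[ℂ] H) : H →ₗ[ℂ] H) = ((A : H →ₗ[ℂ] H)) ^ k := by
        intro k
        induction k with
        | zero => rfl
        | succ m ih =>
          rw [pow_succ, pow_succ, ← ih]
          rfl
      have hAn : ((A ^ n : H →L[ℂ] H) : H →ₗ[ℂ] H) = ((-(t : ℂ)) ^ n) • d ^ (2 * n) := by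
        have h2 : (A : H →ₗ[ℂ] H) = (-(t : ℂ)) • (d * d) := by
          simp [hA, ContinuousLinearMap.coe_smul, ContinuousLinearMap.coe_comp]
          rfl
        rw [h1, h2, smul_pow]
        congr 1
        rw [pow_mul, pow_two]
      rw [map_smul]
      have : φ (A ^ n) = 0 := by
        show LinearMap.trace ℂ H (e * ((A ^ n : H →L[ℂ] H) : H →ₗ[ℂ] H)) = 0
        rw [hAn, mul_smul_comm, map_smul,
          trace_eps_pow_eq_zero d e hde (2 * n) (by omega), smul_zero]
      rw [this, smul_zero]
    rw [tsum_eq_single 0 hzero]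
    simp only [hφ, Nat.factorial_zero, Nat.cast_one, inv_one, one_smul, pow_zero,
      LinearMap.coe_mk, AddHom.coe_mk]
    rw [show ((1 : H →L[ℂ] H) : H →ₗ[ℂ] H) = 1 from rfl, mul_one]
  rw [hφc]
  exact trace_involution_eq_of_symm d e hD.isSymmetric hde he2
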